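/- arXiv:1902.00196 — 3 statements merged into one kernel-verified Lean document; each statement's English description precedes it below -/
import Mathlib

section
/- Let F : CohI → CohI be a normal functor and ⟨X⁰⟩x ∈ NF(F) a normal form, with d = Card|X⁰|. For n ∈ ℕ, let [n] denote the coherence space with an n-element web in which all points are pairwise coherent. Then Card|F(X⁰ ⊗ [n])| ≥ n^d. -/
open CategoryTheory Limits

/-- A coherence space: a web together with a reflexive symmetric coherence relation. -/
structure CohSpace : Type 1 where
  web : Type
  coh : web → web → Prop
  refl : ∀ x, coh x x
  symm : ∀ {x y}, coh x y → coh y x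

/-- An embedding of coherence spaces: an injection preserving and reflecting coherence. -/
@[ext]
structure CohEmb (X Y : CohSpace) : Type where
  toFun : X.web → Y.web
  inj : Function.Injective toFun
  coh_iff : ∀ x x', X.coh x x' ↔ Y.coh (toFun x) (toFun x')

/-- The category `CohI` of coherence spaces and embeddings. -/
instance : Category CohSpace where
  Hom := CohEmb
  id X := ⟨id, fun _ _ h => h, fun _ _ => Iff.rfl⟩
  comp f g := ⟨g.toFun ∘ f.toFun, g.inj.comp f.inj,
    fun x x' => (f.coh_iff x x').trans (g.coh_iff _ _)⟩
  id_comp _ := rfl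
  comp_id _ := rfl
  assoc _ _ _ := rfl

/-- A clique: a set of pairwise coherent points. -/
def CohSpace.IsClique (X : CohSpace) (c : Set X.web) : Prop :=
  ∀ ⦃x⦄, x ∈ c → ∀ ⦃y⦄, y ∈ c → X.coh x y

/-- Linear negation (dual) of a coherence space. -/
def CohSpace.dual (X : CohSpace) : CohSpace where
  web := X.web
  coh x y := x = y ∨ ¬ X.coh x y
  refl _ := Or.inl rfl
  symm h := h.elim (fun h' => Or.inl h'.symm) (fun h' => Or.inr fun hc => h' (X.symm hc))

/-- Tensor product of coherence spaces. -/
def CohSpace.tens (X Y : CohSpace) : CohSpace where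
  web := X.web × Y.web
  coh p q := X.coh p.1 q.1 ∧ Y.coh p.2 q.2
  refl p := ⟨X.refl p.1, Y.refl p.2⟩
  symm h := ⟨X.symm h.1, Y.symm h.2⟩

/-- Direct sum (`⊕`) of coherence spaces. -/
def CohSpace.sum (X Y : CohSpace) : CohSpace where
  web := X.web ⊕ Y.web
  coh := Sum.LiftRel X.coh Y.coh
  refl x := by cases x with
    | inl a => exact Sum.LiftRel.inl (X.refl a)
    | inr b => exact Sum.LiftRel.inr (Y.refl b)
  symm h := by cases h with
    | inl h => exact Sum.LiftRel.inl (X.symm h)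
    | inr h => exact Sum.LiftRel.inr (Y.symm h)

/-- Linear implication `X ⊸ Y := (X ⊗ Y^⊥)^⊥`. -/
def CohSpace.lolly (X Y : CohSpace) : CohSpace := (X.tens Y.dual).dual

/-- The with connective `X & Y := (X^⊥ ⊕ Y^⊥)^⊥`. -/
def CohSpace.withc (X Y : CohSpace) : CohSpace := (X.dual.sum Y.dual).dual

/-- The one-point coherence space (interpretation of `1` and `⊥`). -/
def oneCoh : CohSpace where
  web := PUnit
  coh _ _ := True
  refl _ := trivial
  symm _ := trivial

/-- The empty coherence space (interpretation of `0` and `⊤`). -/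
def topCoh : CohSpace where
  web := Empty
  coh x _ := x.elim
  refl x := x.elim
  symm {x} _ := x.elim

/-- The induced embedding between duals. -/
def CohEmb.dualMap {X Y : CohSpace} (f : X ⟶ Y) : X.dual ⟶ Y.dual where
  toFun := f.toFun
  inj := f.inj
  coh_iff x x' := by
    constructor
    · rintro (rfl | h)
      · exact Or.inl rfl
      · exact Or.inr fun hc => h ((f.coh_iff _ _).2 hc)
    · rintro (h | h)
      · exact Or.inl (f.inj h)
      · exact Or.inr fun hc => h ((f.coh_iff _ _).1 hc)

/-- The induced embedding between tensor products. -/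
def CohEmb.tensMap {X X' Y Y' : CohSpace} (f : X ⟶ X') (g : Y ⟶ Y') :
    X.tens Y ⟶ X'.tens Y' where
  toFun := Prod.map f.toFun g.toFun
  inj := f.inj.prodMap g.inj
  coh_iff p q := and_congr (f.coh_iff _ _) (g.coh_iff _ _)

/-- The induced embedding between direct sums. -/
def CohEmb.sumMap {X X' Y Y' : CohSpace} (f : X ⟶ X') (g : Y ⟶ Y') :
    X.sum Y ⟶ X'.sum Y' where
  toFun := Sum.map f.toFun g.toFun
  inj := f.inj.sumMap g.inj
  coh_iff x x' := by
    constructor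
    · intro h
      cases h with
      | inl h => exact Sum.LiftRel.inl ((f.coh_iff _ _).1 h)
      | inr h => exact Sum.LiftRel.inr ((g.coh_iff _ _).1 h)
    · intro h
      cases x with
      | inl a => cases x' with
        | inl a' => exact Sum.LiftRel.inl ((f.coh_iff _ _).2 (by cases h; assumption))
        | inr b' => exact absurd h (by intro hh; cases hh)
      | inr b => cases x' with
        | inl a' => exact absurd h (by intro hh; cases hh)
        | inr b' => exact Sum.LiftRel.inr ((g.coh_iff _ _).2 (by cases h; assumption))

/-- Linear negation as a covariant endofunctor of `CohI`. -/
def dualFunctor : CohSpace ⥤ CohSpace where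
  obj := CohSpace.dual
  map := CohEmb.dualMap
  map_id _ := rfl
  map_comp _ _ := rfl

/-- Tensor as a functor on the product category. -/
def tensorFunctor : CohSpace × CohSpace ⥤ CohSpace where
  obj p := p.1.tens p.2
  map f := CohEmb.tensMap f.1 f.2
  map_id _ := rfl
  map_comp _ _ := rfl

/-- Sum as a functor on the product category. -/
def sumFunctor : CohSpace × CohSpace ⥤ CohSpace where
  obj p := p.1.sum p.2
  map f := CohEmb.sumMap f.1 f.2
  map_id p := by
    apply CohEmb.ext
    funext x
    cases x <;> rfl
  map_comp f g := by
    apply CohEmb.ext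
    funext x
    cases x <;> rfl

/-- The category `CohI^n`. -/
abbrev CohTuple (n : ℕ) := Fin n → CohSpace

/-- A normal functor: one preserving filtered colimits and finite pullbacks. -/
def IsNormalFunctor {C : Type*} {D : Type*} [Category C] [Category D] (F : C ⥤ D) : Prop :=
  PreservesFilteredColimits F ∧ PreservesLimitsOfShape WalkingCospan F

/-- The web functor `CohI ⥤ Set`. -/
def webF : CohSpace ⥤ Type where
  obj X := X.web
  map f := TypeCat.ofHom f.toFun
  map_id _ := rfl
  map_comp _ _ := rfl

/-- The category of elements of the web presheaf `|F|` of `F : CohI^n ⥤ CohI`. -/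
abbrev Elts {n : ℕ} (F : CohTuple n ⥤ CohSpace) := (F ⋙ webF).Elements

/-- `(X⃗, x)` is a normal form of `F`: its webs are finite and it is initial in its own
slice category of `El(|F|)`. -/
def IsNormalForm {n : ℕ} {F : CohTuple n ⥤ CohSpace} (e : Elts F) : Prop :=
  (∀ i, Finite (e.1 i).web) ∧
    ∀ (f : Elts F) (u : f ⟶ e), ∃! v : e ⟶ f, v ≫ u = 𝟙 e

/-- The pointwise dual functor `F^⊥`. -/
def dualF {n : ℕ} (F : CohTuple n ⥤ CohSpace) : CohTuple n ⥤ CohSpace := F ⋙ dualFunctor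

/-- The pointwise tensor functor `F ⊗ G`. -/
def tensF {n : ℕ} (F G : CohTuple n ⥤ CohSpace) : CohTuple n ⥤ CohSpace :=
  F.prod' G ⋙ tensorFunctor

/-- The pointwise sum functor `F ⊕ G`. -/
def sumF {n : ℕ} (F G : CohTuple n ⥤ CohSpace) : CohTuple n ⥤ CohSpace :=
  F.prod' G ⋙ sumFunctor

/-- The pointwise linear implication functor `F ⊸ G`. -/
def lollyF {n : ℕ} (F G : CohTuple n ⥤ CohSpace) : CohTuple n ⥤ CohSpace :=
  dualF (tensF F (dualF G))

/-- The degree of a normal functor: the supremum of the cardinalities of the webs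
occurring in its normal forms. -/
noncomputable def degree {n : ℕ} (F : CohTuple n ⥤ CohSpace) : ℕ∞ :=
  ⨆ (e : Elts F) (_ : IsNormalForm e) (i : Fin n), (Nat.card (e.1 i).web : ℕ∞)

/-- `F` sends coherence spaces with finite webs to coherence spaces with finite webs. -/
def PreservesFiniteWebs {n : ℕ} (F : CohTuple n ⥤ CohSpace) : Prop :=
  ∀ X : CohTuple n, (∀ i, Finite (X i).web) → Finite (F.obj X).web

/-- A finite normal functor: one preserving finiteness of webs and of finite degree. -/
def IsFiniteFunctor {n : ℕ} (F : CohTuple n ⥤ CohSpace) : Prop :=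
  PreservesFiniteWebs F ∧ degree F < ⊤

/-- `NF(F)`: the set of isomorphism classes of normal forms of `F`. -/
def NFSet {n : ℕ} (F : CohTuple n ⥤ CohSpace) :
    Set (Quotient (isIsomorphicSetoid (Elts F))) :=
  { q | ∃ e : Elts F, IsNormalForm e ∧ Quotient.mk _ e = q }

/-- A uniform family of cliques of `F : CohI^n ⥤ CohI`. -/
def IsUniformFamily {n : ℕ} (F : CohTuple n ⥤ CohSpace)
    (c : ∀ X : CohTuple n, Set (F.obj X).web) : Prop :=
  (∀ X, (F.obj X).IsClique (c X)) ∧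
    ∀ (X Y : CohTuple n) (ι : X ⟶ Y), c X = (F.map ι).toFun ⁻¹' c Y

/-- Coherence of two normal forms: all their instantiations along embeddings into a
common tuple are coherent. -/
def NFCoherent {n : ℕ} {F : CohTuple n ⥤ CohSpace} (e e' : Elts F) : Prop :=
  ∀ (Z : CohTuple n) (ι : e.1 ⟶ Z) (κ : e'.1 ⟶ Z),
    (F.obj Z).coh ((F.map ι).toFun e.2) ((F.map κ).toFun e'.2)

/-- A coherence space structure on a canonical finite web `Fin k`. -/
structure FinCohData where
  k : ℕ
  r : Fin k → Fin k → Prop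
  refl : ∀ i, r i i
  symm : ∀ {i j}, r i j → r j i

/-- The coherence space associated to a `FinCohData`. -/
def FinCohData.toCoh (d : FinCohData) : CohSpace where
  web := Fin d.k
  coh := d.r
  refl := d.refl
  symm := d.symm

/-- A canonical tuple of finite coherence spaces. -/
def canonTuple {n : ℕ} (d : Fin n → FinCohData) : CohTuple n := fun i => (d i).toCoh

/-- Self-coherent normal forms of `F` carried by canonical tuples of finite coherence
spaces; the web of the trace is the set of their isomorphism classes. -/
def CanonNF {n : ℕ} (F : CohTuple n ⥤ CohSpace) : Type :=
  Σ d : Fin n → FinCohData,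
    { x : (F.obj (canonTuple d)).web //
        IsNormalForm (F := F) ⟨canonTuple d, x⟩ ∧
          NFCoherent (F := F) ⟨canonTuple d, x⟩ ⟨canonTuple d, x⟩ }

/-- The element of `El(|F|)` carried by a canonical normal form. -/
def CanonNF.toElts {n : ℕ} {F : CohTuple n ⥤ CohSpace} (c : CanonNF F) : Elts F :=
  ⟨canonTuple c.1, c.2.1⟩

/-- Canonical normal forms are identified when isomorphic in `El(|F|)`. -/
def traceSetoid {n : ℕ} (F : CohTuple n ⥤ CohSpace) : Setoid (CanonNF F) :=
  (isIsomorphicSetoid (Elts F)).comap CanonNF.toElts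

/-- The trace `Tr(F)`: isomorphism classes of self-coherent normal forms, with the
coherence relation between normal forms. -/
def Tr {n : ℕ} (F : CohTuple n ⥤ CohSpace) : CohSpace where
  web := Quotient (traceSetoid F)
  coh q q' := ∃ c c' : CanonNF F,
    Quotient.mk (traceSetoid F) c = q ∧ Quotient.mk (traceSetoid F) c' = q' ∧
      NFCoherent c.toElts c'.toElts
  refl q := by
    obtain ⟨c, rfl⟩ := Quotient.exists_rep q
    exact ⟨c, c, rfl, rfl, c.2.2.2⟩
  symm h := by
    obtain ⟨c, c', h1, h2, h3⟩ := h
    exact ⟨c', c, h2, h1, fun Z ι κ => (F.obj Z).symm (h3 Z κ ι)⟩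

-- STATEMENT 14
/-- The coherence space `[n]` with `n` pairwise coherent points. -/
def fullCoh (n : ℕ) : CohSpace where
  web := Fin n
  coh _ _ := True
  refl _ := trivial
  symm _ := trivial

section Stmt14Aux

/-- A morphism in `CohTuple 1` determined by its component at `0`. -/
def oneHom {X Y : CohTuple 1} (k : X 0 ⟶ Y 0) : X ⟶ Y := fun i =>
  eqToHom (congrArg X (Subsingleton.elim i 0)) ≫ k ≫
    eqToHom (congrArg Y (Subsingleton.elim i 0)).symm

theorem oneHom_zero {X Y : CohTuple 1} (k : X 0 ⟶ Y 0) : oneHom k 0 = k := by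
  simp [oneHom]

theorem eq_oneHom {X Y : CohTuple 1} (f : X ⟶ Y) : f = oneHom (f 0) := by
  funext i
  obtain rfl : i = 0 := Subsingleton.elim i 0
  simp [oneHom]

theorem oneHom_comp {X Y Z : CohTuple 1} (k : X 0 ⟶ Y 0) (l : Y 0 ⟶ Z 0) :
    oneHom k ≫ oneHom l = oneHom (k ≫ l) := by
  funext i
  obtain rfl : i = 0 := Subsingleton.elim i 0
  show oneHom k 0 ≫ oneHom l 0 = oneHom (k ≫ l) 0
  simp [oneHom_zero]

theorem oneHom_cancel {X Y : CohTuple 1} {k l : X 0 ⟶ Y 0}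
    (h : oneHom k = oneHom l) : k = l := by
  have := congrFun h 0
  rwa [oneHom_zero, oneHom_zero] at this

variable {F : CohTuple 1 ⥤ CohSpace} (e : Elts F) (n : ℕ)

/-- The embedding `X⁰ ↪ X⁰ ⊗ [n]` induced by `g : |X⁰| → Fin n`. -/
def embG (g : (e.1 0).web → Fin n) : e.1 0 ⟶ (e.1 0).tens (fullCoh n) where
  toFun a := (a, g a)
  inj a b h := (Prod.ext_iff.1 h).1
  coh_iff a a' := ⟨fun hc => ⟨hc, trivial⟩, fun hc => hc.1⟩

/-- The corresponding morphism in `CohTuple 1`. -/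
def iotaG (g : (e.1 0).web → Fin n) :
    e.1 ⟶ (fun _ : Fin 1 => (e.1 0).tens (fullCoh n)) :=
  oneHom (embG e n g)

/-- The point of `F(X⁰ ⊗ [n])` associated to `g`. -/
def PhiG (g : (e.1 0).web → Fin n) :
    (F.obj (fun _ => (e.1 0).tens (fullCoh n))).web :=
  (F.map (iotaG e n g)).toFun e.2

/-- The subspace of `X⁰` on which `g` and `h` agree. -/
def agreeSpace (g h : (e.1 0).web → Fin n) : CohSpace where
  web := { a : (e.1 0).web // g a = h a }
  coh p q := (e.1 0).coh p.1 q.1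
  refl p := (e.1 0).refl p.1
  symm hc := (e.1 0).symm hc

/-- Inclusion of the agreement subspace. -/
def agreeIncl (g h : (e.1 0).web → Fin n) : agreeSpace e n g h ⟶ e.1 0 where
  toFun := Subtype.val
  inj := Subtype.val_injective
  coh_iff _ _ := Iff.rfl

/-- The inclusion as a morphism of tuples. -/
def agreeInclHom (g h : (e.1 0).web → Fin n) :
    (fun _ : Fin 1 => agreeSpace e n g h) ⟶ e.1 :=
  oneHom (agreeIncl e n g h)

theorem agree_condition (g h : (e.1 0).web → Fin n) :
    agreeInclHom e n g h ≫ iotaG e n g = agreeInclHom e n g h ≫ iotaG e n h := by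
  unfold agreeInclHom iotaG
  rw [oneHom_comp, oneHom_comp]
  have key : agreeIncl e n g h ≫ embG e n g = agreeIncl e n g h ≫ embG e n h := by
    apply CohEmb.ext
    funext a
    show ((a.1, g a.1) : (e.1 0).web × Fin n) = (a.1, h a.1)
    rw [a.2]
  rw [key]

theorem cone_key (g h : (e.1 0).web → Fin n)
    (s : PullbackCone (iotaG e n g) (iotaG e n h)) (p : (s.pt 0).web) :
    (s.fst 0).toFun p = (s.snd 0).toFun p ∧
      g ((s.fst 0).toFun p) = h ((s.fst 0).toFun p) := by
  have hc := s.condition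
  unfold iotaG at hc
  rw [eq_oneHom s.fst, eq_oneHom s.snd, oneHom_comp, oneHom_comp] at hc
  have h0 : s.fst 0 ≫ embG e n g = s.snd 0 ≫ embG e n h := oneHom_cancel hc
  have hp := congrFun (congrArg CohEmb.toFun h0) p
  have hp1 : (s.fst 0).toFun p = (s.snd 0).toFun p := (Prod.ext_iff.1 hp).1
  have hp2 : g ((s.fst 0).toFun p) = h ((s.snd 0).toFun p) := (Prod.ext_iff.1 hp).2
  exact ⟨hp1, by rw [hp2, hp1]⟩

/-- The zeroth component of the lift to the agreement cone. -/
def liftZero (g h : (e.1 0).web → Fin n)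
    (s : PullbackCone (iotaG e n g) (iotaG e n h)) :
    s.pt 0 ⟶ agreeSpace e n g h where
  toFun p := ⟨(s.fst 0).toFun p, (cone_key e n g h s p).2⟩
  inj p q hpq := (s.fst 0).inj (congrArg Subtype.val hpq)
  coh_iff p q := (s.fst 0).coh_iff p q

/-- The agreement cone is a pullback. -/
def agreeIsLimit (g h : (e.1 0).web → Fin n) :
    IsLimit (PullbackCone.mk (agreeInclHom e n g h) (agreeInclHom e n g h)
      (agree_condition e n g h)) :=
  PullbackCone.IsLimit.mk (agree_condition e n g h)
    (fun s => oneHom (liftZero e n g h s))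
    (fun s => by
      unfold agreeInclHom
      rw [oneHom_comp, eq_oneHom s.fst]
      have key : liftZero e n g h s ≫ agreeIncl e n g h = s.fst 0 := CohEmb.ext rfl
      rw [key])
    (fun s => by
      unfold agreeInclHom
      rw [oneHom_comp, eq_oneHom s.snd]
      have key : liftZero e n g h s ≫ agreeIncl e n g h = s.snd 0 :=
        CohEmb.ext (funext fun p => (cone_key e n g h s p).1)
      rw [key])
    (fun s m hm1 _ => by
      unfold agreeInclHom at hm1
      rw [eq_oneHom m, eq_oneHom s.fst, oneHom_comp] at hm1
      have h0 : m 0 ≫ agreeIncl e n g h = s.fst 0 := oneHom_cancel hm1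
      rw [eq_oneHom m]
      have key : m 0 = liftZero e n g h s :=
        CohEmb.ext (funext fun p => Subtype.ext (congrFun (congrArg CohEmb.toFun h0) p))
      rw [key])

theorem PhiG_injective (hF : IsNormalFunctor F) (he : IsNormalForm e) :
    Function.Injective (PhiG e n) := by
  intro g h hgh
  haveI := hF.2
  have hbig := isLimitPullbackConeMapOfIsLimit F (agree_condition e n g h)
    (agreeIsLimit e n g h)
  -- the one-point cone at `e.2`
  let xemb : oneCoh ⟶ F.obj e.1 :=
    { toFun := fun _ => e.2
      inj := fun _ _ _ => rfl
      coh_iff := fun _ _ => iff_of_true trivial ((F.obj e.1).refl e.2) }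
  have hcomm : xemb ≫ F.map (iotaG e n g) = xemb ≫ F.map (iotaG e n h) :=
    CohEmb.ext (funext fun _ => hgh)
  let ℓ := PullbackCone.IsLimit.lift hbig xemb xemb hcomm
  have hfac : ℓ ≫ F.map (agreeInclHom e n g h) = xemb :=
    PullbackCone.IsLimit.lift_fst hbig xemb xemb hcomm
  set z : (F ⋙ webF).obj (fun _ : Fin 1 => agreeSpace e n g h) :=
    ℓ.toFun PUnit.unit with hzdef
  have hz : (F ⋙ webF).map (agreeInclHom e n g h) z = e.2 :=
    congrFun (congrArg CohEmb.toFun hfac) PUnit.unit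
  let pz : Elts F := ⟨fun _ : Fin 1 => agreeSpace e n g h, z⟩
  let u : pz ⟶ e := ⟨agreeInclHom e n g h, hz⟩
  obtain ⟨v, hv, -⟩ := he.2 pz u
  have hv1 : v.1 ≫ agreeInclHom e n g h = 𝟙 e.1 := congrArg Subtype.val hv
  unfold agreeInclHom at hv1
  rw [eq_oneHom v.1, oneHom_comp, eq_oneHom (𝟙 e.1)] at hv1
  have hk : v.1 0 ≫ agreeIncl e n g h = (𝟙 e.1) 0 := oneHom_cancel hv1
  funext a
  have ha : ((v.1 0).toFun a).val = a := congrFun (congrArg CohEmb.toFun hk) a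
  have hb := ((v.1 0).toFun a).2
  rwa [ha] at hb

end Stmt14Aux

theorem stmt14 (F : CohTuple 1 ⥤ CohSpace) (hF : IsNormalFunctor F)
    (e : Elts F) (he : IsNormalForm e) (n : ℕ) :
    ((n ^ Nat.card (e.1 0).web : ℕ) : Cardinal) ≤
      Cardinal.mk (F.obj (fun _ => (e.1 0).tens (fullCoh n))).web := by
  classical
  haveI : Finite (e.1 0).web := he.1 0
  haveI : Fintype (e.1 0).web := Fintype.ofFinite _
  have h1 : ((n ^ Nat.card (e.1 0).web : ℕ) : Cardinal) =
      Cardinal.mk ((e.1 0).web → Fin n) := by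
    rw [Cardinal.mk_fintype, Fintype.card_fun, Fintype.card_fin,
      Nat.card_eq_fintype_card]
  rw [h1]
  exact Cardinal.mk_le_of_injective (PhiG_injective e n hF he)
end

section
/- Let F, G : CohI^n → CohI be normal functors. Then: (i) NF(F ⊕ G) is in bijection with the disjoint union NF(F) ⊎ NF(G), a normal form ⟨X⃗⟩x of F corresponding to the normal form ⟨X⃗⟩inl(x) of F ⊕ G, and a normal form ⟨Y⃗⟩y of G to ⟨Y⃗⟩inr(y); (ii) if ⟨X⃗⟩x ∈ NF(F) and ⟨Y⃗⟩y ∈ NF(G), then ⟨X₁ ⊕ Y₁, …, Xₙ ⊕ Yₙ⟩(F(κ⃗)(x), G(λ⃗)(y)) ∈ NF(F ⊗ G), where κ_i : X_i ↪ X_i ⊕ Y_i and λ_i : Y_i ↪ X_i ⊕ Y_i are the canonical embeddings. -/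
open CategoryTheory Limits

-- STATEMENT 15
/-- The left injection `X ↪ X ⊕ Y` as an embedding. -/
def sumInl (X Y : CohSpace) : X ⟶ X.sum Y where
  toFun := Sum.inl
  inj := Sum.inl_injective
  coh_iff x x' := ⟨Sum.LiftRel.inl, by intro h; cases h; assumption⟩

/-- The right injection `Y ↪ X ⊕ Y` as an embedding. -/
def sumInr (X Y : CohSpace) : Y ⟶ X.sum Y where
  toFun := Sum.inr
  inj := Sum.inr_injective
  coh_iff x x' := ⟨Sum.LiftRel.inr, by intro h; cases h; assumption⟩

/-- `⟨X⃗⟩x ↦ ⟨X⃗⟩inl(x)`, as a map `El(|F|) → El(|F ⊕ G|)`. -/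
def eltsInl {n : ℕ} {F G : CohTuple n ⥤ CohSpace} (e : Elts F) : Elts (sumF F G) :=
  ⟨e.1, Sum.inl e.2⟩

/-- `⟨Y⃗⟩y ↦ ⟨Y⃗⟩inr(y)`, as a map `El(|G|) → El(|F ⊕ G|)`. -/
def eltsInr {n : ℕ} {F G : CohTuple n ⥤ CohSpace} (e : Elts G) : Elts (sumF F G) :=
  ⟨e.1, Sum.inr e.2⟩

section AuxPullback

/-- Concrete pullback coherence space of two embeddings. -/
def pbCoh {Z X W : CohSpace} (u : Z ⟶ W) (κ : X ⟶ W) : CohSpace where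
  web := { p : Z.web × X.web // u.toFun p.1 = κ.toFun p.2 }
  coh p q := Z.coh p.1.1 q.1.1
  refl _ := Z.refl _
  symm h := Z.symm h

def pbFst {Z X W : CohSpace} (u : Z ⟶ W) (κ : X ⟶ W) : pbCoh u κ ⟶ Z where
  toFun p := p.1.1
  inj := by
    rintro ⟨⟨a, b⟩, hp⟩ ⟨⟨a', b'⟩, hq⟩ h
    dsimp at h hp hq
    subst h
    have : b = b' := κ.inj (hp.symm.trans hq)
    subst this; rfl
  coh_iff _ _ := Iff.rfl

def pbSnd {Z X W : CohSpace} (u : Z ⟶ W) (κ : X ⟶ W) : pbCoh u κ ⟶ X where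
  toFun p := p.1.2
  inj := by
    rintro ⟨⟨a, b⟩, hp⟩ ⟨⟨a', b'⟩, hq⟩ h
    dsimp at h hp hq
    subst h
    have : a = a' := u.inj (by rw [hp, hq])
    subst this; rfl
  coh_iff p q := by
    show Z.coh p.1.1 q.1.1 ↔ _
    rw [u.coh_iff, p.2, q.2, ← κ.coh_iff]

lemma pbComm {Z X W : CohSpace} (u : Z ⟶ W) (κ : X ⟶ W) :
    pbFst u κ ≫ u = pbSnd u κ ≫ κ := by
  apply CohEmb.ext; funext p; exact p.2

variable {n : ℕ}

/-- Componentwise pullback tuple. -/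
def pbT {Z X W : CohTuple n} (u : Z ⟶ W) (κ : X ⟶ W) : CohTuple n :=
  fun i => pbCoh (u i) (κ i)

def pbTFst {Z X W : CohTuple n} (u : Z ⟶ W) (κ : X ⟶ W) : pbT u κ ⟶ Z :=
  fun i => pbFst (u i) (κ i)

def pbTSnd {Z X W : CohTuple n} (u : Z ⟶ W) (κ : X ⟶ W) : pbT u κ ⟶ X :=
  fun i => pbSnd (u i) (κ i)

lemma pbTComm {Z X W : CohTuple n} (u : Z ⟶ W) (κ : X ⟶ W) :
    pbTFst u κ ≫ u = pbTSnd u κ ≫ κ := by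
  funext i; exact pbComm (u i) (κ i)

/-- The componentwise pullback tuple is a pullback in `CohI^n`. -/
def pbTIsLimit {Z X W : CohTuple n} (u : Z ⟶ W) (κ : X ⟶ W) :
    IsLimit (PullbackCone.mk (pbTFst u κ) (pbTSnd u κ) (pbTComm u κ)) := by
  apply PullbackCone.IsLimit.mk (pbTComm u κ)
    (lift := fun s => fun i =>
      { toFun := fun v => ⟨((s.fst i).toFun v, (s.snd i).toFun v), by
          have h := congrFun s.condition i
          have h2 := congrArg CohEmb.toFun h
          exact congrFun h2 v⟩
        inj := fun a b h => (s.fst i).inj (congrArg (fun p => p.1.1) h)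
        coh_iff := fun a b => (s.fst i).coh_iff a b })
  · intro s; funext i; apply CohEmb.ext; rfl
  · intro s; funext i; apply CohEmb.ext; rfl
  · intro s m h1 h2
    funext i
    apply CohEmb.ext
    funext v
    have e1 := congrFun (congrArg CohEmb.toFun (congrFun h1 i)) v
    have e2 := congrFun (congrArg CohEmb.toFun (congrFun h2 i)) v
    exact Subtype.ext (Prod.ext e1 e2)

/-- If `F` is normal, the web of `F` of a pullback surjects onto the set-pullback of webs. -/
lemma exists_pb_preimage {F : CohTuple n ⥤ CohSpace} (hF : IsNormalFunctor F)
    {Z X W : CohTuple n} (u : Z ⟶ W) (κ : X ⟶ W)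
    (z : (F.obj Z).web) (x : (F.obj X).web)
    (h : (F.map u).toFun z = (F.map κ).toFun x) :
    ∃ p : (F.obj (pbT u κ)).web,
      (F.map (pbTFst u κ)).toFun p = z ∧ (F.map (pbTSnd u κ)).toFun p = x := by
  haveI := hF.2
  have hlim := isLimitPullbackConeMapOfIsLimit F (pbTComm u κ) (pbTIsLimit u κ)
  have hcomm : pbFst (F.map u) (F.map κ) ≫ F.map u = pbSnd (F.map u) (F.map κ) ≫ F.map κ :=
    pbComm _ _
  let l := PullbackCone.IsLimit.lift hlim (pbFst (F.map u) (F.map κ))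
    (pbSnd (F.map u) (F.map κ)) hcomm
  have hl1 := PullbackCone.IsLimit.lift_fst hlim (pbFst (F.map u) (F.map κ))
    (pbSnd (F.map u) (F.map κ)) hcomm
  have hl2 := PullbackCone.IsLimit.lift_snd hlim (pbFst (F.map u) (F.map κ))
    (pbSnd (F.map u) (F.map κ)) hcomm
  refine ⟨l.toFun ⟨(z, x), h⟩, ?_, ?_⟩
  · exact congrFun (congrArg CohEmb.toFun hl1) ⟨(z, x), h⟩
  · exact congrFun (congrArg CohEmb.toFun hl2) ⟨(z, x), h⟩

/-- Key factorization lemma: a normal form factors uniquely through any element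
mapping onto its instantiation. -/
lemma nf_factor {F : CohTuple n ⥤ CohSpace} (hF : IsNormalFunctor F)
    (e : Elts F) (he : IsNormalForm e) {Z W : CohTuple n} (u : Z ⟶ W) (κ : e.1 ⟶ W)
    (z : (F.obj Z).web) (hz : (F.map u).toFun z = (F.map κ).toFun e.2) :
    ∃! a : e.1 ⟶ Z, a ≫ u = κ ∧ (F.map a).toFun e.2 = z := by
  obtain ⟨p, hp1, hp2⟩ := exists_pb_preimage hF u κ z e.2 hz
  have hu' : ((F ⋙ webF).map (pbTSnd u κ)) p = e.2 := hp2
  obtain ⟨v, hv, hvuniq⟩ := he.2 ⟨pbT u κ, p⟩ ⟨pbTSnd u κ, hu'⟩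
  -- existence
  refine ⟨v.1 ≫ pbTFst u κ, ⟨?_, ?_⟩, ?_⟩
  · have : v.1 ≫ pbTSnd u κ = 𝟙 e.1 := congrArg Subtype.val hv
    calc (v.1 ≫ pbTFst u κ) ≫ u = v.1 ≫ (pbTFst u κ ≫ u) := by simp
      _ = v.1 ≫ (pbTSnd u κ ≫ κ) := by rw [pbTComm]
      _ = (v.1 ≫ pbTSnd u κ) ≫ κ := by simp
      _ = κ := by rw [this]; simp
  · have hv2 : (F.map v.1).toFun e.2 = p := v.2
    have : F.map (v.1 ≫ pbTFst u κ) = F.map v.1 ≫ F.map (pbTFst u κ) := F.map_comp _ _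
    rw [this]
    show (F.map (pbTFst u κ)).toFun ((F.map v.1).toFun e.2) = z
    rw [hv2, hp1]
  · -- uniqueness
    rintro a ⟨ha1, ha2⟩
    -- build the factorization of a through the pullback
    have key : ∀ i (w : (e.1 i).web), (u i).toFun ((a i).toFun w) = (κ i).toFun w := by
      intro i w
      exact congrFun (congrArg CohEmb.toFun (congrFun ha1 i)) w
    let h : e.1 ⟶ pbT u κ := fun i =>
      { toFun := fun w => ⟨((a i).toFun w, w), key i w⟩
        inj := fun w w' hww => congrArg (fun p => p.1.2) hww
        coh_iff := fun w w' => (a i).coh_iff w w' }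
    have hh2 : h ≫ pbTSnd u κ = 𝟙 e.1 := by funext i; apply CohEmb.ext; rfl
    have hh1 : h ≫ pbTFst u κ = a := by funext i; apply CohEmb.ext; rfl
    -- h is a morphism of elements e ⟶ ⟨pbT, p⟩
    have hFh : ((F ⋙ webF).map h) e.2 = p := by
      apply (F.map (pbTSnd u κ)).inj
      have c1 : (F.map (pbTSnd u κ)).toFun ((F.map h).toFun e.2)
          = (F.map (h ≫ pbTSnd u κ)).toFun e.2 := by rw [F.map_comp]; rfl
      rw [show ((F ⋙ webF).map h) e.2 = (F.map h).toFun e.2 from rfl, c1, hh2, hp2,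
        F.map_id]
      rfl
    have : (⟨h, hFh⟩ : e ⟶ (⟨pbT u κ, p⟩ : Elts F)) = v := by
      apply hvuniq
      apply Subtype.ext
      exact hh2
    have hv1 : h = v.1 := congrArg Subtype.val this
    rw [← hh1, hv1]

end AuxPullback

section AuxSum

variable {n : ℕ} {F G : CohTuple n ⥤ CohSpace}

lemma elts_section_val {H : CohTuple n ⥤ CohSpace} {p q : Elts H} {f : p ⟶ q} {g : q ⟶ p}
    (h : f ≫ g = 𝟙 p) : f.1 ≫ g.1 = 𝟙 p.1 := congrArg Subtype.val h

lemma elts_section_of_val {H : CohTuple n ⥤ CohSpace} {p q : Elts H} {f : p ⟶ q} {g : q ⟶ p}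
    (h : f.1 ≫ g.1 = 𝟙 p.1) : f ≫ g = 𝟙 p := Subtype.ext h

lemma mapInl {A B : CohTuple n} (g : A ⟶ B) {x : (F.obj A).web} {x' : (F.obj B).web}
    (h : (F.map g).toFun x = x') :
    ((sumF F G ⋙ webF).map g) (Sum.inl x : (F.obj A).web ⊕ (G.obj A).web) = Sum.inl x' :=
  show (Sum.inl ((F.map g).toFun x) : (F.obj B).web ⊕ (G.obj B).web) = _ from
    congrArg Sum.inl h

lemma mapInl' {A B : CohTuple n} (g : A ⟶ B) {x : (F.obj A).web} {x' : (F.obj B).web}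
    (h : ((sumF F G ⋙ webF).map g) (Sum.inl x : (F.obj A).web ⊕ (G.obj A).web)
      = Sum.inl x') : (F.map g).toFun x = x' :=
  Sum.inl.inj (show (Sum.inl ((F.map g).toFun x) : (F.obj B).web ⊕ (G.obj B).web)
    = Sum.inl x' from h)

lemma mapInr {A B : CohTuple n} (g : A ⟶ B) {x : (G.obj A).web} {x' : (G.obj B).web}
    (h : (G.map g).toFun x = x') :
    ((sumF F G ⋙ webF).map g) (Sum.inr x : (F.obj A).web ⊕ (G.obj A).web) = Sum.inr x' :=
  show (Sum.inr ((G.map g).toFun x) : (F.obj B).web ⊕ (G.obj B).web) = _ from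
    congrArg Sum.inr h

lemma mapInr' {A B : CohTuple n} (g : A ⟶ B) {x : (G.obj A).web} {x' : (G.obj B).web}
    (h : ((sumF F G ⋙ webF).map g) (Sum.inr x : (F.obj A).web ⊕ (G.obj A).web)
      = Sum.inr x') : (G.map g).toFun x = x' :=
  Sum.inr.inj (show (Sum.inr ((G.map g).toFun x) : (F.obj B).web ⊕ (G.obj B).web)
    = Sum.inr x' from h)

lemma isNF_eltsInl_iff (e : Elts F) :
    IsNormalForm (eltsInl (G := G) e) ↔ IsNormalForm e := by
  constructor
  · rintro ⟨hfin, hini⟩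
    refine ⟨hfin, ?_⟩
    rintro ⟨Y, y⟩ u
    obtain ⟨v, hv, hvu⟩ := hini (eltsInl ⟨Y, y⟩) ⟨u.1, mapInl u.1 u.2⟩
    refine ⟨⟨v.1, mapInl' v.1 v.2⟩, ?_, ?_⟩
    · have h1 := elts_section_val hv
      exact elts_section_of_val h1
    · intro w hw
      have h2 := elts_section_val hw
      have : (⟨w.1, mapInl w.1 w.2⟩ : eltsInl (G := G) e ⟶ eltsInl ⟨Y, y⟩) = v :=
        hvu _ (elts_section_of_val h2)
      have h4 := congrArg Subtype.val this
      exact Subtype.ext h4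
  · rintro ⟨hfin, hini⟩
    refine ⟨hfin, ?_⟩
    rintro ⟨Y, y' | y'⟩ u
    · obtain ⟨v, hv, hvu⟩ := hini ⟨Y, y'⟩ ⟨u.1, mapInl' u.1 u.2⟩
      refine ⟨⟨v.1, mapInl v.1 v.2⟩, ?_, ?_⟩
      · have h1 := elts_section_val hv
        exact elts_section_of_val h1
      · intro w hw
        have h2 := elts_section_val hw
        have : (⟨w.1, mapInl' w.1 w.2⟩ : e ⟶ (⟨Y, y'⟩ : Elts F)) = v :=
          hvu _ (elts_section_of_val h2)
        have h4 := congrArg Subtype.val this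
        exact Subtype.ext h4
    · exact absurd
        (show (Sum.inr ((G.map u.1).toFun y') : (F.obj e.1).web ⊕ (G.obj e.1).web)
          = Sum.inl e.2 from u.2) Sum.inr_ne_inl

lemma isNF_eltsInr_iff (e : Elts G) :
    IsNormalForm (eltsInr (F := F) e) ↔ IsNormalForm e := by
  constructor
  · rintro ⟨hfin, hini⟩
    refine ⟨hfin, ?_⟩
    rintro ⟨Y, y⟩ u
    obtain ⟨v, hv, hvu⟩ := hini (eltsInr ⟨Y, y⟩) ⟨u.1, mapInr u.1 u.2⟩
    refine ⟨⟨v.1, mapInr' v.1 v.2⟩, ?_, ?_⟩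
    · have h1 := elts_section_val hv
      exact elts_section_of_val h1
    · intro w hw
      have h2 := elts_section_val hw
      have : (⟨w.1, mapInr w.1 w.2⟩ : eltsInr (F := F) e ⟶ eltsInr ⟨Y, y⟩) = v :=
        hvu _ (elts_section_of_val h2)
      have h4 := congrArg Subtype.val this
      exact Subtype.ext h4
  · rintro ⟨hfin, hini⟩
    refine ⟨hfin, ?_⟩
    rintro ⟨Y, y' | y'⟩ u
    · exact absurd
        (show (Sum.inl ((F.map u.1).toFun y') : (F.obj e.1).web ⊕ (G.obj e.1).web)
          = Sum.inr e.2 from u.2) Sum.inl_ne_inr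
    · obtain ⟨v, hv, hvu⟩ := hini ⟨Y, y'⟩ ⟨u.1, mapInr' u.1 u.2⟩
      refine ⟨⟨v.1, mapInr v.1 v.2⟩, ?_, ?_⟩
      · have h1 := elts_section_val hv
        exact elts_section_of_val h1
      · intro w hw
        have h2 := elts_section_val hw
        have : (⟨w.1, mapInr' w.1 w.2⟩ : e ⟶ (⟨Y, y'⟩ : Elts G)) = v :=
          hvu _ (elts_section_of_val h2)
        have h4 := congrArg Subtype.val this
        exact Subtype.ext h4

end AuxSum




theorem stmt15 {n : ℕ} (F G : CohTuple n ⥤ CohSpace)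
    (hF : IsNormalFunctor F) (hG : IsNormalFunctor G) :
    ({ e : Elts (sumF F G) | IsNormalForm e }
        = eltsInl '' { e : Elts F | IsNormalForm e } ∪
            eltsInr '' { e : Elts G | IsNormalForm e } ∧
      Function.Injective (eltsInl (F := F) (G := G)) ∧
      Function.Injective (eltsInr (F := F) (G := G)) ∧
      Disjoint (eltsInl '' { e : Elts F | IsNormalForm e })
        (eltsInr '' { e : Elts G | IsNormalForm e })) ∧
    (∀ (e : Elts F) (f : Elts G), IsNormalForm e → IsNormalForm f →
      IsNormalForm (F := tensF F G)
        ⟨fun i => (e.1 i).sum (f.1 i),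
          ((F.map fun i => sumInl (e.1 i) (f.1 i)).toFun e.2,
            (G.map fun i => sumInr (e.1 i) (f.1 i)).toFun f.2)⟩) := by
  constructor
  · refine ⟨?_, ?_, ?_, ?_⟩
    · ext q
      constructor
      · intro hq
        obtain ⟨Z, w⟩ := q
        rcases w with x | x
        · exact Or.inl ⟨⟨Z, x⟩, (isNF_eltsInl_iff _).1 hq, rfl⟩
        · exact Or.inr ⟨⟨Z, x⟩, (isNF_eltsInr_iff _).1 hq, rfl⟩
      · rintro (⟨e, he, rfl⟩ | ⟨e, he, rfl⟩)
        · exact (isNF_eltsInl_iff e).2 he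
        · exact (isNF_eltsInr_iff e).2 he
    · rintro ⟨A, x⟩ ⟨B, y⟩ h
      obtain ⟨h1, h2⟩ := Sigma.mk.inj_iff.mp h
      subst h1
      replace h2 := eq_of_heq h2
      cases Sum.inl.inj h2
      rfl
    · rintro ⟨A, x⟩ ⟨B, y⟩ h
      obtain ⟨h1, h2⟩ := Sigma.mk.inj_iff.mp h
      subst h1
      replace h2 := eq_of_heq h2
      cases Sum.inr.inj h2
      rfl
    · rw [Set.disjoint_left]
      rintro q ⟨⟨A, x⟩, _, rfl⟩ ⟨⟨B, y⟩, _, hf⟩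
      obtain ⟨h1, h2⟩ := Sigma.mk.inj_iff.mp hf
      subst h1
      replace h2 := eq_of_heq h2
      exact Sum.inr_ne_inl h2
  · intro e f he hf
    set κv : e.1 ⟶ (fun i => (e.1 i).sum (f.1 i)) :=
      (fun i => sumInl (e.1 i) (f.1 i)) with hκv
    set lv : f.1 ⟶ (fun i => (e.1 i).sum (f.1 i)) :=
      (fun i => sumInr (e.1 i) (f.1 i)) with hlv
    constructor
    · intro i
      haveI := he.1 i
      haveI := hf.1 i
      show Finite ((e.1 i).web ⊕ (f.1 i).web)
      infer_instance
    · rintro ⟨Z, z1, z2⟩ u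
      have hz1 : (F.map u.1).toFun z1 = (F.map κv).toFun e.2 := congrArg Prod.fst u.2
      have hz2 : (G.map u.1).toFun z2 = (G.map lv).toFun f.2 := congrArg Prod.snd u.2
      obtain ⟨a, ⟨ha1, ha2⟩, hauniq⟩ := nf_factor hF e he u.1 κv z1 hz1
      obtain ⟨b, ⟨hb1, hb2⟩, hbuniq⟩ := nf_factor hG f hf u.1 lv z2 hz2
      have key : ∀ i (s : ((e.1 i).sum (f.1 i)).web),
          (u.1 i).toFun (Sum.elim (a i).toFun (b i).toFun s) = s := by
        intro i s
        cases s with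
        | inl w => exact congrFun (congrArg CohEmb.toFun (congrFun ha1 i)) w
        | inr w => exact congrFun (congrArg CohEmb.toFun (congrFun hb1 i)) w
      let v1 : (fun i => (e.1 i).sum (f.1 i)) ⟶ Z := fun i =>
        { toFun := Sum.elim (a i).toFun (b i).toFun
          inj := fun s s' h => by
            have h2 := congrArg (u.1 i).toFun h
            rwa [key i s, key i s'] at h2
          coh_iff := fun s s' => by
            have h2 := (u.1 i).coh_iff (Sum.elim (a i).toFun (b i).toFun s)
              (Sum.elim (a i).toFun (b i).toFun s')
            rw [key i s, key i s'] at h2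
            exact h2.symm }
      have hcompa : κv ≫ v1 = a := by funext i; apply CohEmb.ext; rfl
      have hcompb : lv ≫ v1 = b := by funext i; apply CohEmb.ext; rfl
      have c1 : (F.map v1).toFun ((F.map κv).toFun e.2) = z1 := by
        have := congrArg (fun (t : CohEmb _ _) => t.toFun e.2) (F.map_comp κv v1)
        calc (F.map v1).toFun ((F.map κv).toFun e.2)
            = (F.map (κv ≫ v1)).toFun e.2 := this.symm
          _ = (F.map a).toFun e.2 := by rw [hcompa]
          _ = z1 := ha2
      have c2 : (G.map v1).toFun ((G.map lv).toFun f.2) = z2 := by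
        have := congrArg (fun (t : CohEmb _ _) => t.toFun f.2) (G.map_comp lv v1)
        calc (G.map v1).toFun ((G.map lv).toFun f.2)
            = (G.map (lv ≫ v1)).toFun f.2 := this.symm
          _ = (G.map b).toFun f.2 := by rw [hcompb]
          _ = z2 := hb2
      have hv1 : ((tensF F G ⋙ webF).map v1)
          ((F.map κv).toFun e.2, (G.map lv).toFun f.2) = (z1, z2) := by
        show ((F.map v1).toFun ((F.map κv).toFun e.2),
          (G.map v1).toFun ((G.map lv).toFun f.2)) = (z1, z2)
        rw [c1, c2]
      refine ⟨⟨v1, hv1⟩, ?_, ?_⟩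
      · apply Subtype.ext
        show v1 ≫ u.1 = 𝟙 _
        funext i; apply CohEmb.ext; funext s
        exact key i s
      · rintro w hw
        have hw1 : w.1 ≫ u.1 = 𝟙 _ := congrArg Subtype.val hw
        have ha' : κv ≫ w.1 = a := by
          apply hauniq
          constructor
          · rw [Category.assoc, hw1, Category.comp_id]
          · have := congrArg (fun (t : CohEmb _ _) => t.toFun e.2) (F.map_comp κv w.1)
            exact this.trans (congrArg Prod.fst w.2)
        have hb' : lv ≫ w.1 = b := by
          apply hbuniq
          constructor
          · rw [Category.assoc, hw1, Category.comp_id]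
          · have := congrArg (fun (t : CohEmb _ _) => t.toFun f.2) (G.map_comp lv w.1)
            exact this.trans (congrArg Prod.snd w.2)
        apply Subtype.ext
        show w.1 = v1
        funext i; apply CohEmb.ext; funext s
        cases s with
        | inl s => exact congrFun (congrArg CohEmb.toFun (congrFun ha' i)) s
        | inr s => exact congrFun (congrArg CohEmb.toFun (congrFun hb' i)) s
end

section
/- Define A * B := (A & 1) ⊗ (B & 1) on coherence spaces. Then * is not associative, even up to isomorphism of coherence spaces: for A = B = 1 (the one-point coherence space) and C = ⊤ (the empty coherence space), the web of (A * B) * C has cardinality 5 while the web of A * (B * C) has cardinality 6. -/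
open CategoryTheory Limits

-- STATEMENT 18
/-- Isomorphism of coherence spaces: a bijection of webs preserving and reflecting
coherence. -/
def CohIso (A B : CohSpace) : Prop :=
  ∃ e : A.web ≃ B.web, ∀ a a', A.coh a a' ↔ B.coh (e a) (e a')

/-- The candidate affine tensor product `A * B := (A & 1) ⊗ (B & 1)`. -/
def starCoh (A B : CohSpace) : CohSpace := (A.withc oneCoh).tens (B.withc oneCoh)

theorem stmt18 :
    Nat.card ((starCoh (starCoh oneCoh oneCoh) topCoh).web) = 5 ∧
    Nat.card ((starCoh oneCoh (starCoh oneCoh topCoh)).web) = 6 ∧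
    ¬ CohIso (starCoh (starCoh oneCoh oneCoh) topCoh)
        (starCoh oneCoh (starCoh oneCoh topCoh)) := by
  have h1 : Nat.card ((starCoh (starCoh oneCoh oneCoh) topCoh).web) = 5 := by
    simp [starCoh, CohSpace.withc, CohSpace.tens, CohSpace.sum, CohSpace.dual, oneCoh, topCoh,
      Nat.card_prod, Nat.card_sum]
  have h2 : Nat.card ((starCoh oneCoh (starCoh oneCoh topCoh)).web) = 6 := by
    simp [starCoh, CohSpace.withc, CohSpace.tens, CohSpace.sum, CohSpace.dual, oneCoh, topCoh,
      Nat.card_prod, Nat.card_sum]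
  refine ⟨h1, h2, ?_⟩
  rintro ⟨e, -⟩
  have := Nat.card_congr e
  omega
end
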